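/- arXiv:1411.6203 — 2 statements merged into one kernel-verified Lean document; each statement's English description precedes it below -/
import Mathlib

section
/- Let G = (V,E) with adjacency matrix A, let M be symmetric with entries in [0,1], M_{uv} ≤ min(M_{uu}, M_{vv}), M_{11} = 1, M_{vv} ≤ M_{1v} for all v, and suppose L(A∘M) - γ L(M) ⪰ 0 for some γ > 0, where ∘ is the entrywise (Hadamard) product and L(W) = diag(W𝟙) - W. Then the subgraph H with vertex set S = supp(diag M) and edge set supp(A∘M) is connected. -/
/-- The unnormalized Laplacian of a symmetric weight matrix: `L(W) = diag(W𝟙) - W`. -/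
def weightedLap {n : ℕ} (W : Matrix (Fin n) (Fin n) ℝ) : Matrix (Fin n) (Fin n) ℝ :=
  Matrix.diagonal (fun i => ∑ j, W i j) - W

/-- If `M` is an anchored matrix (symmetric, entries in `[0,1]`, `M_{11} = 1`,
`M_{uv} ≤ min(M_{uu}, M_{vv})`, `M_{vv} ≤ M_{1v}`) satisfying the LMI
`L(A∘M) - γ L(M) ⪰ 0` for some `γ > 0`, then the subgraph with vertex set
`S = supp(diag M)` and edge set `supp(A∘M)` is connected. -/
theorem lmi_feasible_implies_connected
    {n : ℕ} (G : SimpleGraph (Fin (n + 1))) [DecidableRel G.Adj]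
    (M : Matrix (Fin (n + 1)) (Fin (n + 1)) ℝ) (γ : ℝ) (hγ : 0 < γ)
    (hsym : M.IsSymm)
    (hrange : ∀ i j, M i j ∈ Set.Icc (0 : ℝ) 1)
    (hdom : ∀ u v, M u v ≤ min (M u u) (M v v))
    (hanchor : M 0 0 = 1)
    (hstar : ∀ v, M v v ≤ M 0 v)
    (hLMI : (weightedLap (Matrix.hadamard (G.adjMatrix ℝ) M) - γ • weightedLap M).PosSemidef) :
    ∀ u, M u u ≠ 0 → ∀ v, M v v ≠ 0 →
      (SimpleGraph.fromRel fun x y => G.Adj x y ∧ 0 < M x y).Reachable u v := by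
  classical
  set H := SimpleGraph.fromRel fun x y => G.Adj x y ∧ 0 < M x y with hH
  suffices h0 : ∀ v, M v v ≠ 0 → H.Reachable 0 v by
    intro u hu v hv
    exact (h0 u hu).symm.trans (h0 v hv)
  intro v hv
  by_contra hvr
  set g : Fin (n + 1) → ℝ := fun x => if H.Reachable 0 x then 1 else -1 with hg
  have hgsq : ∀ x, g x * g x = 1 := by
    intro x; simp only [hg]; split <;> norm_num
  have hgle : ∀ i j, g i * g j ≤ 1 := by
    intro i j
    simp only [hg]; split <;> split <;> norm_num
  have hgcases : ∀ i j, g i * g j = 1 ∨ g i * g j = -1 := by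
    intro i j
    simp only [hg]; split <;> split <;> norm_num
  -- quadratic form of a Laplacian against g
  have quad : ∀ W : Matrix (Fin (n + 1)) (Fin (n + 1)) ℝ,
      dotProduct g (Matrix.mulVec (weightedLap W) g) = ∑ i, ∑ j, W i j * (1 - g i * g j) := by
    intro W
    have hmv : ∀ i, (Matrix.mulVec (weightedLap W) g) i = ∑ j, W i j * (g i - g j) := by
      intro i
      simp only [weightedLap, Matrix.mulVec, dotProduct, Matrix.sub_apply,
        Matrix.diagonal_apply, sub_mul, ite_mul, zero_mul]
      rw [Finset.sum_sub_distrib, Finset.sum_ite_eq Finset.univ i (fun x => (∑ j, W i j) * g x)]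
      simp only [Finset.mem_univ, if_true, Finset.sum_mul, mul_sub, Finset.sum_sub_distrib]
    simp only [dotProduct, hmv, Finset.mul_sum]
    apply Finset.sum_congr rfl
    intro i _
    apply Finset.sum_congr rfl
    intro j _
    linear_combination W i j * hgsq i
  -- cross-cut entries of A ∘ M vanish
  have cross : ∀ i j, g i * g j = -1 →
      (Matrix.hadamard (G.adjMatrix ℝ) M) i j = 0 := by
    intro i j hij
    by_cases hA : G.Adj i j
    · by_cases hM : 0 < M i j
      · exfalso
        have hadj : H.Adj i j := by
          rw [hH, SimpleGraph.fromRel_adj]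
          exact ⟨hA.ne, Or.inl ⟨hA, hM⟩⟩
        have hiff : H.Reachable 0 i ↔ H.Reachable 0 j :=
          ⟨fun h => h.trans hadj.reachable, fun h => h.trans hadj.symm.reachable⟩
        have : g i = g j := by
          simp only [hg]
          by_cases h : H.Reachable 0 i
          · rw [if_pos h, if_pos (hiff.mp h)]
          · rw [if_neg h, if_neg (fun h' => h (hiff.mpr h'))]
        rw [this, hgsq j] at hij
        norm_num at hij
      · have : M i j = 0 := le_antisymm (not_lt.mp hM) (hrange i j).1
        simp [Matrix.hadamard_apply, this]
    · simp [Matrix.hadamard_apply, hA]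
  -- Q(A∘M) = 0
  have hQA : dotProduct g (Matrix.mulVec (weightedLap (Matrix.hadamard (G.adjMatrix ℝ) M)) g) = 0 := by
    rw [quad]
    apply Finset.sum_eq_zero
    intro i _
    apply Finset.sum_eq_zero
    intro j _
    rcases hgcases i j with h | h
    · rw [h]; ring
    · rw [cross i j h]; ring
  -- Q(M) is bounded below by the (0, v) term
  have hg0 : g 0 = 1 := by
    simp only [hg]
    exact if_pos (SimpleGraph.Reachable.refl 0)
  have hgv : g v = -1 := by simp [hg, hvr]
  have hterm : M 0 v * (1 - g 0 * g v) = 2 * M 0 v := by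
    rw [hg0, hgv]; ring
  have hMv : 0 < M v v := lt_of_le_of_ne (hrange v v).1 (Ne.symm hv)
  have hM0v : 0 < M 0 v := lt_of_lt_of_le hMv (hstar v)
  have hQM : 2 * M 0 v ≤ dotProduct g (Matrix.mulVec (weightedLap M) g) := by
    rw [quad]
    calc 2 * M 0 v = ∑ j, (if j = v then M 0 j * (1 - g 0 * g j) else 0) := by
          rw [Finset.sum_ite_eq' Finset.univ v (fun j => M 0 j * (1 - g 0 * g j)),
            if_pos (Finset.mem_univ v), hg0, hgv]
          ring
      _ ≤ ∑ j, M 0 j * (1 - g 0 * g j) := by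
          apply Finset.sum_le_sum
          intro j _
          split
          · exact le_rfl
          · exact mul_nonneg (hrange 0 j).1 (by linarith [hgle 0 j])
      _ ≤ ∑ i, ∑ j, M i j * (1 - g i * g j) := by
          apply Finset.single_le_sum (f := fun i => ∑ j, M i j * (1 - g i * g j))
            (fun i _ => Finset.sum_nonneg fun j _ =>
              mul_nonneg (hrange i j).1 (by linarith [hgle i j]))
            (Finset.mem_univ 0)
  -- contradiction with PSD
  have hPSD := hLMI.dotProduct_mulVec_nonneg g
  rw [Matrix.sub_mulVec, Matrix.smul_mulVec, dotProduct_sub,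
    dotProduct_smul, star_trivial] at hPSD
  rw [hQA] at hPSD
  have : γ * (2 * M 0 v) ≤ γ * (dotProduct g (Matrix.mulVec (weightedLap M) g)) :=
    mul_le_mul_of_nonneg_left hQM hγ.le
  simp only [smul_eq_mul] at hPSD
  nlinarith
end

section
/- Let G be a graph with maximum degree D and consider any M feasible for the LMI constraints: M symmetric with entries in [0,1], M_{11}=1, M_{uv} ≤ min(M_{uu},M_{vv}), M_{vv} ≤ M_{1v}, and L(A∘M) - γ L(M) ⪰ 0 with 0 < γ < 1. Then trace(M) ≤ D/γ + 1 (up to the anchor term; in particular trace(M) = O(D/γ)). -/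
lemma quad_form_indicator {n : ℕ} (W : Matrix (Fin (n + 1)) (Fin (n + 1)) ℝ) :
    dotProduct (fun i => if i = 0 then (0:ℝ) else 1)
      ((weightedLap W).mulVec (fun i => if i = 0 then (0:ℝ) else 1)) =
    ∑ i, (if i = 0 then 0 else W i 0) := by
  unfold weightedLap
  simp only [dotProduct, Matrix.mulVec, Matrix.sub_apply, Matrix.diagonal_apply]
  refine Finset.sum_congr rfl fun i _ => ?_
  by_cases hi : i = 0
  · simp [hi]
  · simp only [hi, if_false, one_mul]
    have : ∀ j, ((if i = j then ∑ k, W i k else 0) - W i j) * (if j = 0 then (0:ℝ) else 1)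
        = (if i = j then ∑ k, W i k else 0) - (if j = 0 then 0 else W i j) := by
      intro j
      by_cases hj : j = 0
      · have hij : i ≠ j := by rw [hj]; exact hi
        simp [hj, hij, hi]
      · simp [hj]
    rw [Finset.sum_congr rfl (fun j _ => this j), Finset.sum_sub_distrib]
    rw [Finset.sum_ite_eq Finset.univ i (fun _ => ∑ k, W i k)]
    simp only [Finset.mem_univ, if_true]
    have h0 : ∑ j, (if j = 0 then W i j else (0:ℝ)) = W i 0 := by simp
    have h2 : ∑ j, W i j = (∑ j, if j = 0 then W i j else (0:ℝ)) + ∑ j, (if j = 0 then 0 else W i j) := by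
      rw [← Finset.sum_add_distrib]
      exact Finset.sum_congr rfl fun j _ => by by_cases hj : j = 0 <;> simp [hj]
    linarith

/-- Trace bound for LMI-feasible matrices: on a graph of maximum degree `D`,
any `M` feasible for the anchored LMI constraints with `0 < γ < 1` satisfies
`trace(M) ≤ D/γ + 1`. -/
theorem lmi_feasible_trace_bound
    {n : ℕ} (G : SimpleGraph (Fin (n + 1))) [DecidableRel G.Adj]
    (D : ℕ) (hD : ∀ v, G.degree v ≤ D)
    (M : Matrix (Fin (n + 1)) (Fin (n + 1)) ℝ) (γ : ℝ) (hγ0 : 0 < γ) (hγ1 : γ < 1)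
    (hsym : M.IsSymm)
    (hrange : ∀ i j, M i j ∈ Set.Icc (0 : ℝ) 1)
    (hdom : ∀ u v, M u v ≤ min (M u u) (M v v))
    (hanchor : M 0 0 = 1)
    (hstar : ∀ v, M v v ≤ M 0 v)
    (hLMI : (weightedLap (Matrix.hadamard (G.adjMatrix ℝ) M) - γ • weightedLap M).PosSemidef) :
    M.trace ≤ (D : ℝ) / γ + 1 := by
  set x : Fin (n + 1) → ℝ := fun i => if i = 0 then 0 else 1 with hx
  have hpsd := hLMI.dotProduct_mulVec_nonneg x
  have hstarx : star x = x := by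
    funext i; simp [hx]
  rw [hstarx, Matrix.sub_mulVec, Matrix.smul_mulVec, dotProduct_sub,
    dotProduct_smul, quad_form_indicator, quad_form_indicator] at hpsd
  -- key inequality: γ * ∑ (M i 0 off-anchor) ≤ ∑ A i 0 * M i 0 off-anchor
  have hkey : γ * ∑ i, (if i = 0 then 0 else M i 0) ≤
      ∑ i, (if i = 0 then 0 else (Matrix.hadamard (G.adjMatrix ℝ) M) i 0) := by
    simpa [smul_eq_mul] using sub_nonneg.mp hpsd
  -- RHS ≤ D
  have hRHS : ∑ i, (if i = 0 then 0 else (Matrix.hadamard (G.adjMatrix ℝ) M) i 0) ≤ (D : ℝ) := by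
    have h1 : ∀ i : Fin (n+1), (if i = 0 then 0 else (Matrix.hadamard (G.adjMatrix ℝ) M) i 0)
        ≤ (if G.Adj 0 i then (1:ℝ) else 0) := by
      intro i
      by_cases hi : i = 0
      · simp [hi]
      · simp only [hi, if_false, Matrix.hadamard_apply, SimpleGraph.adjMatrix_apply]
        by_cases ha : G.Adj i 0
        · have ha' : G.Adj 0 i := (G.adj_comm i 0).mp ha
          simp only [ha, ha', if_true, one_mul]
          exact (hrange i 0).2
        · have ha' : ¬ G.Adj 0 i := fun h => ha ((G.adj_comm 0 i).mp h)
          simp [ha, ha']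
    calc ∑ i, (if i = 0 then 0 else (Matrix.hadamard (G.adjMatrix ℝ) M) i 0)
        ≤ ∑ i, (if G.Adj 0 i then (1:ℝ) else 0) := Finset.sum_le_sum fun i _ => h1 i
      _ = (Finset.univ.filter (fun i => G.Adj 0 i)).card := by
          rw [Finset.sum_ite, Finset.sum_const, Finset.sum_const]; simp
      _ = (G.degree 0 : ℝ) := by
          rw [← SimpleGraph.neighborFinset_eq_filter]; rfl
      _ ≤ (D : ℝ) := by exact_mod_cast hD 0
  -- LHS ≥ γ * (trace - 1)
  have htr : M.trace = 1 + ∑ i, (if i = 0 then 0 else M i i) := by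
    have h3 : M.trace = ∑ i, ((if i = 0 then M i i else 0) + (if i = 0 then 0 else M i i)) := by
      unfold Matrix.trace Matrix.diag
      exact Finset.sum_congr rfl fun i _ => by by_cases hi : i = 0 <;> simp [hi]
    rw [h3, Finset.sum_add_distrib]
    simp [hanchor]
  have hLHS : M.trace - 1 ≤ ∑ i, (if i = 0 then 0 else M i 0) := by
    rw [htr]
    have : ∀ i : Fin (n+1), (if i = 0 then (0:ℝ) else M i i) ≤ (if i = 0 then 0 else M i 0) := by
      intro i
      by_cases hi : i = 0
      · simp [hi]
      · simp only [hi, if_false]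
        calc M i i ≤ M 0 i := hstar i
          _ = M i 0 := hsym.apply i 0
    linarith [Finset.sum_le_sum (fun i (_ : i ∈ Finset.univ) => this i)]
  have : γ * (M.trace - 1) ≤ (D : ℝ) := by
    calc γ * (M.trace - 1) ≤ γ * ∑ i, (if i = 0 then 0 else M i 0) := by
          exact mul_le_mul_of_nonneg_left hLHS hγ0.le
      _ ≤ _ := le_trans hkey hRHS
  have h2 : M.trace - 1 ≤ (D : ℝ) / γ := by
    rw [le_div_iff₀ hγ0]; linarith [this]
  linarith
end
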